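/- Let (G, d) be a finite metric space on n points with squared-distance matrix M = (d(v_i,v_j)²). Then (G, d) embeds isometrically into ℝ^{n−1} if and only if Q_M ≤ 0, where Q_M = max { Σ_{1≤i<j≤n} m_ij x_i x_j : Σ x_k² = 1, Σ x_k = 0 }. -/

import Mathlib

noncomputable def Q (n : ℕ) (M : Fin n → Fin n → ℝ) : ℝ :=
  sSup {q : ℝ | ∃ x : Fin n → ℝ, ∑ k, x k ^ 2 = 1 ∧ ∑ k, x k = 0 ∧
    q = ∑ i, ∑ j, if i < j then M i j * x i * x j else 0}

open Finset in
/-- Quadratic form of squared distances of points in an inner product space,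
for a vector with zero sum. -/
lemma quad_dist_sq {E : Type*} [NormedAddCommGroup E] [InnerProductSpace ℝ E]
    {m : ℕ} (p : Fin m → E) (x : Fin m → ℝ) (hx : ∑ k, x k = 0) :
    ∑ i, ∑ j, dist (p i) (p j) ^ 2 * (x i * x j)
      = -(2 * ‖∑ i, x i • p i‖ ^ 2) := by
  have h1 : ∀ i j : Fin m, dist (p i) (p j) ^ 2 * (x i * x j)
      = ‖p i‖^2 * x i * x j + ‖p j‖^2 * x j * x i
        - 2 * (inner ℝ (x i • p i) (x j • p j) : ℝ) := by
    intro i j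
    rw [dist_eq_norm, norm_sub_sq_real, real_inner_smul_left, real_inner_smul_right]
    ring
  have h4 : ∑ i, ∑ j, (2 : ℝ) * (inner ℝ (x i • p i) (x j • p j) : ℝ)
      = 2 * ‖∑ i, x i • p i‖ ^ 2 := by
    simp only [← Finset.mul_sum, ← inner_sum]
    rw [← sum_inner, real_inner_self_eq_norm_sq]
  have e1 : ∑ i, ∑ j, ‖p i‖ ^ 2 * x i * x j = 0 := by
    simp only [← Finset.mul_sum, hx, mul_zero, Finset.sum_const_zero]
  have e2 : ∑ i, ∑ j, ‖p j‖ ^ 2 * x j * x i = 0 := by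
    rw [Finset.sum_comm]; exact e1
  simp only [h1, Finset.sum_sub_distrib, Finset.sum_add_distrib]
  rw [e1, e2, h4]
  ring

open Finset in
/-- Symmetrization of a strictly-upper-triangular sum. -/
lemma upper_sum_eq {m : ℕ} (M : Fin m → Fin m → ℝ) (hsymm : ∀ i j, M i j = M j i)
    (hdiag : ∀ i, M i i = 0) (x : Fin m → ℝ) :
    ∑ i, ∑ j, (if i < j then M i j * x i * x j else 0)
      = (∑ i, ∑ j, M i j * (x i * x j)) / 2 := by
  have h2 : ∑ i, ∑ j, (if i < j then M i j * x i * x j else 0)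
      = ∑ i, ∑ j, (if j < i then M i j * x i * x j else 0) := by
    rw [Finset.sum_comm]
    refine Finset.sum_congr rfl fun i _ => Finset.sum_congr rfl fun j _ => ?_
    by_cases h : j < i <;> simp [h, hsymm i j, mul_right_comm]
  have h3 : ∑ i, ∑ j, M i j * (x i * x j)
      = ∑ i, ∑ j, ((if i < j then M i j * x i * x j else 0)
          + (if j < i then M i j * x i * x j else 0)) := by
    refine Finset.sum_congr rfl fun i _ => Finset.sum_congr rfl fun j _ => ?_
    rcases lt_trichotomy i j with h | h | h
    · simp [h, h.not_gt, mul_assoc]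
    · subst h; simp [lt_irrefl, hdiag i]
    · simp [h, h.not_gt, mul_assoc]
  simp only [Finset.sum_add_distrib] at h3
  rw [h3, ← h2]
  ring

open Finset in
lemma bddAbove_Qset {m : ℕ} (M : Fin m → Fin m → ℝ) :
    BddAbove {q : ℝ | ∃ x : Fin m → ℝ, ∑ k, x k ^ 2 = 1 ∧ ∑ k, x k = 0 ∧
      q = ∑ i, ∑ j, if i < j then M i j * x i * x j else 0} := by
  refine ⟨∑ i, ∑ j, |M i j|, ?_⟩
  rintro q ⟨x, hx1, hx0, rfl⟩
  have hxb : ∀ i, x i ^ 2 ≤ 1 := by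
    intro i
    rw [← hx1]
    exact Finset.single_le_sum (fun k _ => sq_nonneg (x k)) (Finset.mem_univ i)
  refine Finset.sum_le_sum fun i _ => Finset.sum_le_sum fun j _ => ?_
  have hij : |x i * x j| ≤ 1 := by
    have : (x i * x j) ^ 2 ≤ 1 := by
      calc (x i * x j) ^ 2 = x i ^ 2 * x j ^ 2 := by ring
      _ ≤ 1 := by nlinarith [sq_nonneg (x i), sq_nonneg (x j), hxb i, hxb j]
    nlinarith [abs_nonneg (x i * x j), sq_abs (x i * x j)]
  by_cases h : i < j
  · simp only [h, if_true]
    calc M i j * x i * x j ≤ |M i j * x i * x j| := le_abs_self _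
      _ = |M i j| * |x i * x j| := by rw [mul_assoc, abs_mul]
      _ ≤ |M i j| * 1 := by nlinarith [abs_nonneg (M i j)]
      _ = |M i j| := mul_one _
  · simp [h, abs_nonneg]

open Finset in
lemma neg_form {m : ℕ} (M : Fin m → Fin m → ℝ) (hsymm : ∀ i j, M i j = M j i)
    (hdiag : ∀ i, M i i = 0) (hQ : Q m M ≤ 0) (x : Fin m → ℝ) (hx : ∑ k, x k = 0) :
    ∑ i, ∑ j, M i j * (x i * x j) ≤ 0 := by
  set t := ∑ k, x k ^ 2 with ht
  rcases eq_or_lt_of_le (Finset.sum_nonneg fun k _ => sq_nonneg (x k) : (0:ℝ) ≤ t) with h0 | hpos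
  · have hz : ∀ k, x k = 0 := by
      intro k
      have := (Finset.sum_eq_zero_iff_of_nonneg (fun k _ => sq_nonneg (x k))).mp h0.symm k
        (Finset.mem_univ k)
      exact pow_eq_zero_iff (by norm_num) |>.mp this
    simp [hz]
  · set s := Real.sqrt t with hs
    have hspos : 0 < s := Real.sqrt_pos.mpr hpos
    have hss : s * s = t := Real.mul_self_sqrt hpos.le
    set x' : Fin m → ℝ := fun k => x k / s with hx'
    have h1 : ∑ k, x' k ^ 2 = 1 := by
      simp only [hx', div_pow, ← Finset.sum_div]
      rw [← ht, sq, hss]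
      field_simp
      exact div_self (ne_of_gt hpos)
    have h2 : ∑ k, x' k = 0 := by
      simp only [hx', ← Finset.sum_div, hx, zero_div]
    have hmem : (∑ i, ∑ j, if i < j then M i j * x' i * x' j else 0) ∈
        {q : ℝ | ∃ y : Fin m → ℝ, ∑ k, y k ^ 2 = 1 ∧ ∑ k, y k = 0 ∧
          q = ∑ i, ∑ j, if i < j then M i j * y i * y j else 0} := ⟨x', h1, h2, rfl⟩
    have hle : (∑ i, ∑ j, if i < j then M i j * x' i * x' j else 0) ≤ 0 :=
      le_trans (le_csSup (bddAbove_Qset M) hmem) hQ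
    rw [upper_sum_eq M hsymm hdiag x'] at hle
    have hEq : ∑ i, ∑ j, M i j * (x' i * x' j) = (∑ i, ∑ j, M i j * (x i * x j)) / t := by
      rw [Finset.sum_div]
      refine Finset.sum_congr rfl fun i _ => ?_
      rw [Finset.sum_div]
      refine Finset.sum_congr rfl fun j _ => ?_
      simp only [hx']
      rw [← hss]
      field_simp
    rw [hEq] at hle
    have hdiv : (∑ i, ∑ j, M i j * (x i * x j)) / t ≤ 0 := by linarith
    rcases div_nonpos_iff.mp hdiv with ⟨_, h2⟩ | ⟨h2, _⟩
    · rw [ht] at *; linarith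
    · exact h2
open Finset in
lemma rev_embed {N : ℕ} {G : Type*} [MetricSpace G] (v : Fin (N + 1) ≃ G)
    (hQ : ∀ x : Fin (N + 1) → ℝ, ∑ k, x k = 0 →
      ∑ i, ∑ j, dist (v i) (v j) ^ 2 * (x i * x j) ≤ 0) :
    ∃ f : G → EuclideanSpace ℝ (Fin N), ∀ x y : G, dist (f x) (f y) = dist x y := by
  classical
  set M : Fin (N + 1) → Fin (N + 1) → ℝ := fun i j => dist (v i) (v j) ^ 2 with hM
  have hsymm : ∀ i j, M i j = M j i := fun i j => by simp [hM, dist_comm]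
  have hdiag : ∀ i, M i i = 0 := fun i => by simp [hM]
  set c : Fin (N + 1) → ℝ := fun i => M i (Fin.last N) with hc
  set C' : Fin (N + 1) → Fin (N + 1) → ℝ := fun i j => (c i + c j - M i j) / 2 with hC'
  have hC'symm : ∀ i j, C' i j = C' j i := fun i j => by simp [hC', hsymm i j]; ring
  have hC'lastR : ∀ i, C' i (Fin.last N) = 0 := fun i => by
    simp [hC', hc, hdiag (Fin.last N)]
  have hC'lastL : ∀ j, C' (Fin.last N) j = 0 := fun j => by rw [hC'symm]; exact hC'lastR j
  -- key identity
  have key : ∀ x : Fin (N + 1) → ℝ, ∑ k, x k = 0 →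
      ∑ i, ∑ j, M i j * (x i * x j) = -2 * ∑ i, ∑ j, C' i j * (x i * x j) := by
    intro x hx
    have e1 : ∑ i, ∑ j, c i * x i * x j = 0 := by
      simp only [← Finset.mul_sum, hx, mul_zero, Finset.sum_const_zero]
    have e2 : ∑ i, ∑ j, c j * x j * x i = 0 := by rw [Finset.sum_comm]; exact e1
    have h1 : ∀ i j, M i j * (x i * x j)
        = c i * x i * x j + c j * x j * x i - 2 * (C' i j * (x i * x j)) := by
      intro i j; simp only [hC']; ring
    simp only [h1, Finset.sum_sub_distrib, Finset.sum_add_distrib]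
    rw [e1, e2]
    simp only [← Finset.mul_sum]
    ring
  set C : Matrix (Fin N) (Fin N) ℝ := fun a b => C' a.castSucc b.castSucc with hCdef
  -- reduction of C' double sum to C
  have reduce : ∀ y : Fin N → ℝ,
      ∑ i, ∑ j, C' i j * ((Fin.snoc y (-(∑ a, y a)) : Fin (N+1) → ℝ) i
          * (Fin.snoc y (-(∑ a, y a)) : Fin (N+1) → ℝ) j)
        = ∑ a, ∑ b, C a b * (y a * y b) := by
    intro y
    set x : Fin (N + 1) → ℝ := Fin.snoc y (-(∑ a, y a)) with hxdef
    rw [Fin.sum_univ_castSucc]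
    have hlast : ∑ j, C' (Fin.last N) j * (x (Fin.last N) * x j) = 0 := by
      simp [hC'lastL]
    rw [hlast, add_zero]
    refine Finset.sum_congr rfl fun a _ => ?_
    rw [Fin.sum_univ_castSucc, hC'lastR, zero_mul, add_zero]
    refine Finset.sum_congr rfl fun b _ => ?_
    simp [hxdef, Fin.snoc_castSucc, hCdef]
  have hsumx : ∀ y : Fin N → ℝ, ∑ k, (Fin.snoc y (-(∑ a, y a)) : Fin (N+1) → ℝ) k = 0 := by
    intro y
    rw [Fin.sum_univ_castSucc]
    simp [Fin.snoc_castSucc, Fin.snoc_last]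
  -- C is positive semidefinite
  have hCpsd : C.PosSemidef := by
    refine Matrix.PosSemidef.of_dotProduct_mulVec_nonneg ?_ ?_
    · ext a b
      simp only [Matrix.conjTranspose_apply, hCdef, star_trivial]
      exact hC'symm _ _
    · intro y
      have h0 := hQ _ (hsumx y)
      rw [key _ (hsumx y), reduce y] at h0
      have hT : 0 ≤ ∑ a, ∑ b, C a b * (y a * y b) := by linarith
      have : dotProduct (star y) (C.mulVec y) = ∑ a, ∑ b, C a b * (y a * y b) := by
        simp only [dotProduct, Matrix.mulVec, Pi.star_apply, star_trivial,
          Finset.mul_sum]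
        exact Finset.sum_congr rfl fun a _ => Finset.sum_congr rfl fun b _ => by ring
      rw [this]
      exact hT
  -- square root
  open scoped MatrixOrder in set R := CFC.sqrt C with hR
  have hRsymm : ∀ a b, R a b = R b a := by
    intro a b
    have h := (open scoped MatrixOrder in (Matrix.nonneg_iff_posSemidef.mp (CFC.sqrt_nonneg C)).1.apply b a)
    rw [hR]
    open scoped MatrixOrder in exact (by simpa using h : CFC.sqrt C a b = CFC.sqrt C b a)
  have hRR : R * R = C := open scoped MatrixOrder in CFC.sqrt_mul_sqrt_self C hCpsd.nonneg
  set P : Fin (N + 1) → EuclideanSpace ℝ (Fin N) :=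
    Fin.snoc (fun a => (WithLp.toLp 2 (fun k => R a k) : EuclideanSpace ℝ (Fin N))) 0 with hP
  have hinner : ∀ a b : Fin N,
      (inner ℝ (P a.castSucc) (P b.castSucc) : ℝ) = C a b := by
    intro a b
    simp only [hP, Fin.snoc_castSucc]
    rw [PiLp.inner_apply]
    rw [← hRR, Matrix.mul_apply]
    exact Finset.sum_congr rfl fun k _ => by
      simp [RCLike.inner_apply, hRsymm k b, mul_comm]
  have hnorm : ∀ a : Fin N, ‖P a.castSucc‖ ^ 2 = C a a := by
    intro a
    rw [← real_inner_self_eq_norm_sq, hinner]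
  have hCdiag : ∀ a : Fin N, C a a = c a.castSucc := by
    intro a
    simp [hCdef, hC', hdiag]
  have hdistsq : ∀ i j : Fin (N + 1), dist (P i) (P j) ^ 2 = M i j := by
    intro i j
    induction i using Fin.lastCases with
    | last =>
      induction j using Fin.lastCases with
      | last => simp [hP, Fin.snoc_last, hdiag]
      | cast b =>
        rw [dist_comm]
        simp only [hP, Fin.snoc_last, dist_zero_right]
        rw [hnorm, hCdiag]
        simp [hc, hsymm]
    | cast a =>
      induction j using Fin.lastCases with
      | last =>
        simp only [hP, Fin.snoc_last, dist_zero_right]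
        rw [hnorm, hCdiag]
      | cast b =>
        rw [dist_eq_norm, norm_sub_sq_real, hnorm, hnorm, hinner]
        rw [hCdiag, hCdiag]
        simp only [hCdef, hC']
        ring
  have hdist : ∀ i j : Fin (N + 1), dist (P i) (P j) = dist (v i) (v j) := by
    intro i j
    have h2 := hdistsq i j
    have := congrArg Real.sqrt h2
    rwa [Real.sqrt_sq dist_nonneg, hM, Real.sqrt_sq dist_nonneg] at this
  refine ⟨fun g => P (v.symm g), fun x y => ?_⟩
  rw [hdist, v.apply_symm_apply, v.apply_symm_apply]
theorem stmt_16 (n : ℕ) (G : Type*) [MetricSpace G] (v : Fin n ≃ G) :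
    (∃ f : G → EuclideanSpace ℝ (Fin (n - 1)),
        ∀ x y : G, dist (f x) (f y) = dist x y) ↔
    Q n (fun i j => dist (v i) (v j) ^ 2) ≤ 0 := by
  have hsymm : ∀ i j : Fin n, dist (v i) (v j) ^ 2 = dist (v j) (v i) ^ 2 := by
    intro i j; rw [dist_comm]
  have hdiag : ∀ i : Fin n, dist (v i) (v i) ^ 2 = 0 := by simp
  constructor
  · rintro ⟨f, hf⟩
    rw [Q]
    refine Real.sSup_le ?_ le_rfl
    rintro q ⟨x, hx1, hx0, rfl⟩
    rw [upper_sum_eq _ hsymm hdiag]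
    have heq : (∑ i, ∑ j, dist (v i) (v j) ^ 2 * (x i * x j))
        = ∑ i, ∑ j, dist ((fun i => f (v i)) i) ((fun i => f (v i)) j) ^ 2 * (x i * x j) :=
      Finset.sum_congr rfl fun i _ => Finset.sum_congr rfl fun j _ => by rw [hf]
    rw [heq, quad_dist_sq (fun i => f (v i)) x hx0]
    have := sq_nonneg ‖∑ i, x i • f (v i)‖
    linarith
  · intro hQle
    cases n with
    | zero => exact ⟨fun g => 0, fun x y => (v.symm x).elim0⟩
    | succ N =>
      exact rev_embed v (fun x hx => neg_form _ hsymm hdiag hQle x hx)
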